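/- arXiv:2203.12251 — 2 statements merged into one kernel-verified Lean document; each statement's English description precedes it below -/
import Mathlib

section
/- For every ε > 0, a compact metric space X admits a finite open cover U with diam(U) ≤ ε and Lebesgue number Leb(U) ≥ ε/4. -/
open MeasureTheory Filter Set Metric Topology ENNReal

variable {X : Type*} [MetricSpace X]

/-- The `n`-th Bowen metric `d_n(x,y) = max_{0 ≤ j ≤ n-1} d(T^j x, T^j y)`. -/
noncomputable def bowenDist (T : X → X) (n : ℕ) (x y : X) : ℝ :=
  ⨆ j ∈ Finset.range n, dist (T^[j] x) (T^[j] y)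

/-- The open Bowen ball of order `n` and radius `ε`. -/
def bowenBall (T : X → X) (n : ℕ) (x : X) (ε : ℝ) : Set X :=
  {y | bowenDist T n x y < ε}

/-- The closed Bowen ball of order `n` and radius `ε`. -/
def bowenClosedBall (T : X → X) (n : ℕ) (x : X) (ε : ℝ) : Set X :=
  {y | bowenDist T n x y ≤ ε}

/-- `F` is `(n,ε)`-separated. -/
def IsBowenSeparated (T : X → X) (n : ℕ) (ε : ℝ) (F : Set X) : Prop :=
  ∀ x ∈ F, ∀ y ∈ F, x ≠ y → ε < bowenDist T n x y

/-- Maximal cardinality of an `(n,ε)`-separated subset of `Z`. -/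
noncomputable def sepNum (T : X → X) (n : ℕ) (ε : ℝ) (Z : Set X) : ℕ :=
  sSup {k | ∃ F : Finset X, ↑F ⊆ Z ∧ IsBowenSeparated T n ε ↑F ∧ F.card = k}

/-- A finite Borel measurable partition of `X`. -/
def IsMeasPartition [MeasurableSpace X] (P : Finset (Set X)) : Prop :=
  (∀ A ∈ P, MeasurableSet A) ∧ (∀ A ∈ P, ∀ B ∈ P, A ≠ B → Disjoint A B) ∧
    (⋃ A ∈ P, A) = Set.univ

/-- A finite open cover of `X`. -/
def IsOpenCover (U : Finset (Set X)) : Prop :=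
  (∀ A ∈ U, IsOpen A) ∧ (⋃ A ∈ U, A) = Set.univ

/-- The `n`-th join `⋁_{j=0}^{n-1} T^{-j} P` of a finite family of sets. -/
noncomputable def joinPart (T : X → X) (P : Finset (Set X)) (n : ℕ) : Finset (Set X) := by
  classical
  exact (Fintype.piFinset (fun _ : Fin n => P)).image
    (fun f => ⋂ j : Fin n, T^[(j : ℕ)] ⁻¹' f j)

/-- Static entropy of a finite partition. -/
noncomputable def partEntropy [MeasurableSpace X] (μ : Measure X) (P : Finset (Set X)) : ℝ :=
  ∑ A ∈ P, Real.negMulLog (μ A).toReal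

/-- Kolmogorov–Sinai entropy of `T` w.r.t. the partition `P`. -/
noncomputable def ksEntropyPart [MeasurableSpace X] (T : X → X) (μ : Measure X)
    (P : Finset (Set X)) : ℝ :=
  limsup (fun n => partEntropy μ (joinPart T P n) / n) atTop

/-- Kolmogorov–Sinai entropy of `(X,T,μ)`. -/
noncomputable def ksEntropy [MeasurableSpace X] (T : X → X) (μ : Measure X) : ℝ≥0∞ :=
  ⨆ (P : Finset (Set X)) (_ : IsMeasPartition P), ENNReal.ofReal (ksEntropyPart T μ P)

/-- `N_μ(V, c)`: the minimal cardinality of a subfamily of `V` whose union has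
measure at least `c`. -/
noncomputable def coverNum [MeasurableSpace X] (μ : Measure X) (V : Finset (Set X)) (c : ℝ) : ℕ :=
  sInf {k | ∃ W : Finset (Set X), W ⊆ V ∧ W.card = k ∧ ENNReal.ofReal c ≤ μ (⋃ A ∈ W, A)}

/-- Shapira's entropy of the open cover `U` at level `δ`. -/
noncomputable def shapiraEnt [MeasurableSpace X] (T : X → X) (μ : Measure X)
    (U : Finset (Set X)) (δ : ℝ) : ℝ :=
  limsup (fun n => Real.log (coverNum μ (joinPart T U n) δ) / n) atTop

/-- `R_μ^δ(T,n,ε)`: minimal number of Bowen `(n,ε)`-balls whose union has measure `> 1 - δ`. -/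
noncomputable def katokCovNum [MeasurableSpace X] (T : X → X) (μ : Measure X) (n : ℕ)
    (ε δ : ℝ) : ℕ :=
  sInf {k | ∃ E : Finset X, E.card = k ∧
    1 - ENNReal.ofReal δ < μ (⋃ x ∈ E, bowenBall T n x ε)}

/-- Upper Katok `ε`-entropy at level `δ`. -/
noncomputable def katokUpperδ [MeasurableSpace X] (T : X → X) (μ : Measure X) (ε δ : ℝ) : ℝ≥0∞ :=
  limsup (fun n => ENNReal.ofReal (Real.log (katokCovNum T μ n ε δ)) / n) atTop

/-- Lower Katok `ε`-entropy at level `δ`. -/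
noncomputable def katokLowerδ [MeasurableSpace X] (T : X → X) (μ : Measure X) (ε δ : ℝ) : ℝ≥0∞ :=
  liminf (fun n => ENNReal.ofReal (Real.log (katokCovNum T μ n ε δ)) / n) atTop

/-- Upper Katok `ε`-entropy: the limit of `katokUpperδ` as `δ → 0`. -/
noncomputable def katokUpper [MeasurableSpace X] (T : X → X) (μ : Measure X) (ε : ℝ) : ℝ≥0∞ :=
  ⨆ δ ∈ Set.Ioo (0 : ℝ) 1, katokUpperδ T μ ε δ

/-- Lower Katok `ε`-entropy: the limit of `katokLowerδ` as `δ → 0`. -/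
noncomputable def katokLower [MeasurableSpace X] (T : X → X) (μ : Measure X) (ε : ℝ) : ℝ≥0∞ :=
  ⨆ δ ∈ Set.Ioo (0 : ℝ) 1, katokLowerδ T μ ε δ

/-- `-log μ(S)`, as an extended nonnegative real (`∞` when `μ S = 0`). -/
noncomputable def negLogMeas [MeasurableSpace X] (μ : Measure X) (S : Set X) : ℝ≥0∞ :=
  if μ S = 0 then ⊤ else ENNReal.ofReal (-Real.log (μ S).toReal)

/-- Upper Brin–Katok local `ε`-entropy of `μ`. -/
noncomputable def bkUpper [MeasurableSpace X] (T : X → X) (μ : Measure X) (ε : ℝ) : ℝ≥0∞ :=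
  ∫⁻ x, limsup (fun n => negLogMeas μ (bowenBall T n x ε) / n) atTop ∂μ

/-- Lower Brin–Katok local `ε`-entropy of `μ`. -/
noncomputable def bkLower [MeasurableSpace X] (T : X → X) (μ : Measure X) (ε : ℝ) : ℝ≥0∞ :=
  ∫⁻ x, liminf (fun n => negLogMeas μ (bowenBall T n x ε) / n) atTop ∂μ

/-- `∑ e^{-s n_i}` over a family of (center, order) pairs. -/
noncomputable def weightSum (s : ℝ) (I : Set (X × ℕ)) : ℝ≥0∞ :=
  ∑' p : I, ENNReal.ofReal (Real.exp (-(s * ((p : X × ℕ).2 : ℝ))))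

/-- Carathéodory–Pesin Bowen pre-measure `M(T,d,Z,s,N,ε)`. -/
noncomputable def bowenPre (T : X → X) (Z : Set X) (s : ℝ) (N : ℕ) (ε : ℝ) : ℝ≥0∞ :=
  ⨅ (I : Set (X × ℕ)) (_ : I.Countable ∧ (∀ p ∈ I, N ≤ p.2) ∧
      Z ⊆ ⋃ p ∈ I, bowenBall T p.2 p.1 ε), weightSum s I

/-- `M(T,d,Z,s,ε) = lim_{N→∞} M(T,d,Z,s,N,ε)`. -/
noncomputable def bowenCP (T : X → X) (Z : Set X) (s : ℝ) (ε : ℝ) : ℝ≥0∞ :=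
  ⨆ N, bowenPre T Z s N ε

/-- Bowen `ε`-entropy of the subset `Z`: the critical value of `s ↦ M(T,d,Z,s,ε)`. -/
noncomputable def bowenEnt (T : X → X) (Z : Set X) (ε : ℝ) : ℝ≥0∞ :=
  sInf {a : ℝ≥0∞ | ∃ s : ℝ, 0 ≤ s ∧ a = ENNReal.ofReal s ∧ bowenCP T Z s ε = 0}

/-- Packing pre-measure `P(T,d,Z,s,N,ε)`: supremum of `∑ e^{-n_i s}` over pairwise disjoint
families of closed Bowen balls with centers in `Z` and orders `≥ N`. -/
noncomputable def packPre (T : X → X) (Z : Set X) (s : ℝ) (N : ℕ) (ε : ℝ) : ℝ≥0∞ :=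
  ⨆ (I : Set (X × ℕ)) (_ : I.Countable ∧ (∀ p ∈ I, N ≤ p.2 ∧ p.1 ∈ Z) ∧
      I.PairwiseDisjoint (fun p => bowenClosedBall T p.2 p.1 ε)), weightSum s I

/-- `P(T,d,Z,s,ε) = lim_{N→∞} P(T,d,Z,s,N,ε)`. -/
noncomputable def packCP (T : X → X) (Z : Set X) (s : ℝ) (ε : ℝ) : ℝ≥0∞ :=
  ⨅ N, packPre T Z s N ε

/-- `𝒫(T,d,Z,s,ε) = inf {∑_i P(T,d,Z_i,s,ε) : Z ⊆ ⋃ Z_i}`. -/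
noncomputable def packOuter (T : X → X) (Z : Set X) (s : ℝ) (ε : ℝ) : ℝ≥0∞ :=
  ⨅ (Zs : ℕ → Set X) (_ : Z ⊆ ⋃ i, Zs i), ∑' i, packCP T (Zs i) s ε

/-- Packing `ε`-entropy of the subset `Z`: critical value of `s ↦ 𝒫(T,d,Z,s,ε)`. -/
noncomputable def packEnt (T : X → X) (Z : Set X) (ε : ℝ) : ℝ≥0∞ :=
  sInf {a : ℝ≥0∞ | ∃ s : ℝ, 0 ≤ s ∧ a = ENNReal.ofReal s ∧ packOuter T Z s ε = 0}

/-- Packing topological entropy of a subset: `lim_{ε → 0} h_top^P(T,Z,d,ε)`. -/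
noncomputable def packEntTotal (T : X → X) (Z : Set X) : ℝ≥0∞ :=
  ⨆ (ε : ℝ) (_ : 0 < ε), packEnt T Z ε

/-- Katok-type Bowen pre-measure `M^δ(T,d,μ,s,N,ε)` for a measure `μ`. -/
noncomputable def bowenPreMeas [MeasurableSpace X] (T : X → X) (μ : Measure X) (s : ℝ)
    (N : ℕ) (ε δ : ℝ) : ℝ≥0∞ :=
  ⨅ (I : Set (X × ℕ)) (_ : I.Countable ∧ (∀ p ∈ I, N ≤ p.2) ∧
      1 - ENNReal.ofReal δ < μ (⋃ p ∈ I, bowenBall T p.2 p.1 ε)), weightSum s I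

/-- The critical value `M^δ(T,d,μ,ε)`. -/
noncomputable def bowenEntMeasδ [MeasurableSpace X] (T : X → X) (μ : Measure X)
    (ε δ : ℝ) : ℝ≥0∞ :=
  sInf {a : ℝ≥0∞ | ∃ s : ℝ, 0 ≤ s ∧ a = ENNReal.ofReal s ∧
    (⨆ N, bowenPreMeas T μ s N ε δ) = 0}

/-- `M_μ(T,d,ε) = lim_{δ → 0} M^δ(T,d,μ,ε)`. -/
noncomputable def bowenEntMeas [MeasurableSpace X] (T : X → X) (μ : Measure X) (ε : ℝ) : ℝ≥0∞ :=
  ⨆ δ ∈ Set.Ioo (0 : ℝ) 1, bowenEntMeasδ T μ ε δ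

/-- `𝒫^δ(T,d,μ,s,ε) = inf {∑_i P(T,d,Z_i,s,ε) : μ(⋃ Z_i) > 1 - δ}`. -/
noncomputable def packOuterMeas [MeasurableSpace X] (T : X → X) (μ : Measure X) (s : ℝ)
    (ε δ : ℝ) : ℝ≥0∞ :=
  ⨅ (Zs : ℕ → Set X) (_ : 1 - ENNReal.ofReal δ < μ (⋃ i, Zs i)), ∑' i, packCP T (Zs i) s ε

/-- The critical value `𝒫^δ(T,d,μ,ε)`. -/
noncomputable def packEntMeasδ [MeasurableSpace X] (T : X → X) (μ : Measure X)
    (ε δ : ℝ) : ℝ≥0∞ :=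
  sInf {a : ℝ≥0∞ | ∃ s : ℝ, 0 ≤ s ∧ a = ENNReal.ofReal s ∧ packOuterMeas T μ s ε δ = 0}

/-- `𝒫_μ(T,d,ε) = lim_{δ → 0} 𝒫^δ(T,d,μ,ε)`. -/
noncomputable def packEntMeas [MeasurableSpace X] (T : X → X) (μ : Measure X) (ε : ℝ) : ℝ≥0∞ :=
  ⨆ δ ∈ Set.Ioo (0 : ℝ) 1, packEntMeasδ T μ ε δ

/-- The `n`-th empirical measure `(1/n) ∑_{j=0}^{n-1} δ_{T^j x}`. -/
noncomputable def empMeas [MeasurableSpace X] (T : X → X) (x : X) (n : ℕ) : Measure X :=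
  (n : ℝ≥0∞)⁻¹ • ∑ j ∈ Finset.range n, Measure.dirac (T^[j] x)

set_option linter.unusedSectionVars false in
lemma empMeas_finite [MeasurableSpace X] (T : X → X) (x : X) (n : ℕ) :
    IsFiniteMeasure (empMeas T x n) := by
  refine ⟨?_⟩
  have h : (∑ j ∈ Finset.range n, Measure.dirac (T^[j] x)) Set.univ = n := by
    rw [Measure.finset_sum_apply]
    simp
  rw [empMeas, Measure.smul_apply, smul_eq_mul, h]
  rcases eq_or_ne (n : ℝ≥0∞) 0 with h0 | h0
  · simp [h0]
  · rw [ENNReal.inv_mul_cancel h0 (by simp)]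
    exact ENNReal.one_lt_top

/-- The `n`-th empirical measure as a finite measure. -/
noncomputable def empFM [MeasurableSpace X] (T : X → X) (x : X) (n : ℕ) : FiniteMeasure X :=
  ⟨empMeas T x n, empMeas_finite T x n⟩

/-- The set of generic points of `μ`: points whose empirical measures converge weakly to `μ`. -/
def genPts [MeasurableSpace X] [OpensMeasurableSpace X] (T : X → X) (μ : Measure X) [IsFiniteMeasure μ] : Set X :=
  {x | Tendsto (fun n => empFM T x n) atTop (𝓝 (⟨μ, ‹_›⟩ : FiniteMeasure X))}

/-- `X_{n,F}`: points whose `n`-th empirical measure lies in `F`. -/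
def XnF [MeasurableSpace X] [OpensMeasurableSpace X] (T : X → X) (F : Set (FiniteMeasure X)) (n : ℕ) : Set X :=
  {x | empFM T x n ∈ F}

/-- Pfister–Sullivan `ε`-entropy of `μ`. -/
noncomputable def psEnt [MeasurableSpace X] [OpensMeasurableSpace X] (T : X → X) (μ : Measure X) [IsFiniteMeasure μ]
    (ε : ℝ) : ℝ≥0∞ :=
  ⨅ (F : Set (FiniteMeasure X)) (_ : F ∈ (𝓝 (⟨μ, ‹_›⟩ : FiniteMeasure X) : Filter (FiniteMeasure X))),
    limsup (fun n => ENNReal.ofReal (Real.log (sepNum T n ε (XnF T F n)) / n)) atTop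

/-- `limsup_{ε → 0⁺} f(ε)/log(1/ε)`. -/
noncomputable def mmUpper (f : ℝ → ℝ≥0∞) : ℝ≥0∞ :=
  limsup (fun ε : ℝ => f ε / ENNReal.ofReal (Real.log (1 / ε))) (𝓝[>] (0 : ℝ))

/-- `liminf_{ε → 0⁺} f(ε)/log(1/ε)`. -/
noncomputable def mmLower (f : ℝ → ℝ≥0∞) : ℝ≥0∞ :=
  liminf (fun ε : ℝ => f ε / ENNReal.ofReal (Real.log (1 / ε))) (𝓝[>] (0 : ℝ))

/-- Bowen upper metric mean dimension of a subset. -/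
noncomputable def mdimBUpper (T : X → X) (Z : Set X) : ℝ≥0∞ :=
  mmUpper (fun ε => bowenEnt T Z ε)

/-- Packing upper metric mean dimension of a subset. -/
noncomputable def mdimPUpper (T : X → X) (Z : Set X) : ℝ≥0∞ :=
  mmUpper (fun ε => packEnt T Z ε)

/-- Packing lower metric mean dimension of a subset. -/
noncomputable def mdimPLower (T : X → X) (Z : Set X) : ℝ≥0∞ :=
  mmLower (fun ε => packEnt T Z ε)

/-- every compact metric space admits a finite open cover with diameter at most
`ε` and Lebesgue number at least `ε/4`. -/
theorem stmt_2 {X : Type*} [MetricSpace X] [CompactSpace X] (ε : ℝ) (hε : 0 < ε) :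
    ∃ U : Finset (Set X), IsOpenCover U ∧ (∀ A ∈ U, EMetric.diam A ≤ ENNReal.ofReal ε) ∧
      ∀ x : X, ∃ A ∈ U, Metric.ball x (ε / 4) ⊆ A := by
  classical
  obtain ⟨t, -, htf, htc⟩ :=
    finite_cover_balls_of_compact (isCompact_univ (X := X)) (show 0 < ε / 4 by linarith)
  refine ⟨htf.toFinset.image (fun c => Metric.ball c (ε / 2)), ⟨?_, ?_⟩, ?_, ?_⟩
  · intro A hA
    simp only [Finset.mem_image] at hA
    obtain ⟨c, -, rfl⟩ := hA
    exact Metric.isOpen_ball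
  · apply Set.eq_univ_of_univ_subset
    intro x hx
    obtain ⟨c, hc, hxc⟩ := by simpa using htc (Set.mem_univ x)
    simp only [Set.mem_iUnion, Finset.mem_image]
    exact ⟨Metric.ball c (ε / 2), ⟨c, by simpa using hc, rfl⟩,
      Metric.mem_ball.2 (by linarith)⟩
  · intro A hA
    simp only [Finset.mem_image] at hA
    obtain ⟨c, -, rfl⟩ := hA
    calc EMetric.diam (Metric.ball c (ε / 2)) ≤ 2 * ENNReal.ofReal (ε / 2) := by
          have h := EMetric.diam_ball (x := c) (r := ENNReal.ofReal (ε / 2))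
          simp at h
          exact h
      _ ≤ ENNReal.ofReal ε := by
          rw [← ENNReal.ofReal_ofNat, ← ENNReal.ofReal_mul (by norm_num)]
          exact ENNReal.ofReal_le_ofReal (le_of_eq (by ring))
  · intro x
    obtain ⟨c, hc, hxc⟩ := by simpa using htc (Set.mem_univ x)
    refine ⟨Metric.ball c (ε / 2), Finset.mem_image.2 ⟨c, by simpa using hc, rfl⟩, ?_⟩
    intro y hy
    rw [Metric.mem_ball] at hy ⊢
    calc dist y c ≤ dist y x + dist x c := dist_triangle _ _ _
      _ < ε / 2 := by linarith
end

section
/- Let (X,T) be a topological dynamical system with metric d and μ a Borel probability measure. For every ε > 0 and δ ∈ (0,1), if U is a finite open cover with Lebesgue number at least ε/4, then N_μ(U^n, 1−δ) ≤ R_μ^δ(T, n, ε/4) for all n, where N_μ(U^n, 1−δ) is the minimal cardinality of a subfamily of U^n whose union has μ-measure at least 1−δ, and R_μ^δ(T,n,ε/4) is the minimal cardinality of a set E ⊂ X with μ(∪_{x∈E} B_n(x, ε/4)) > 1−δ. -/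
open MeasureTheory Filter Set Metric Topology ENNReal

variable {X : Type*} [MetricSpace X]

lemma bowenDist_self' (T : X → X) (n : ℕ) (x : X) : bowenDist T n x x = 0 := by
  unfold bowenDist
  simp

lemma bowenDist_lt_iff' (T : X → X) (n : ℕ) (x y : X) {ε : ℝ} (hε : 0 < ε) :
    bowenDist T n x y < ε ↔ ∀ j ∈ Finset.range n, dist (T^[j] x) (T^[j] y) < ε := by
  classical
  set d : ℕ → ℝ := fun j => dist (T^[j] x) (T^[j] y) with hd
  set g : ℕ → ℝ := fun j => ⨆ (_ : j ∈ Finset.range n), d j with hgdef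
  have hbd : BddAbove (Set.range g) := by
    refine ⟨∑ i ∈ Finset.range n, d i, ?_⟩
    rintro _ ⟨j, rfl⟩
    exact Real.iSup_le (fun hj => Finset.single_le_sum (f := d) (fun i _ => dist_nonneg) hj)
      (Finset.sum_nonneg fun i _ => dist_nonneg)
  constructor
  · intro h j hj
    have h1 : d j ≤ g j :=
      le_ciSup (f := fun _ : j ∈ Finset.range n => d j) (Set.Finite.bddAbove (Set.finite_range _)) hj
    have h2 : g j ≤ bowenDist T n x y := le_ciSup hbd j
    calc d j ≤ g j := h1
      _ ≤ bowenDist T n x y := h2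
      _ < ε := h
  · intro h
    rcases Nat.eq_zero_or_pos n with hn | hn
    · subst hn
      have : bowenDist T 0 x y = 0 := by unfold bowenDist; simp
      rw [this]; exact hε
    · have hne : (Finset.range n).Nonempty := ⟨0, Finset.mem_range.mpr hn⟩
      set m : ℝ := (Finset.range n).sup' hne d with hm
      have hm0 : 0 ≤ m := le_trans dist_nonneg (Finset.le_sup' d hne.choose_spec)
      have hmε : m < ε := (Finset.sup'_lt_iff hne).mpr h
      have hle : bowenDist T n x y ≤ m := by
        refine Real.iSup_le (fun j => ?_) hm0
        exact Real.iSup_le (fun hj => Finset.le_sup' d hj) hm0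
      exact lt_of_le_of_lt hle hmε

lemma bowenBall_eq' (T : X → X) (n : ℕ) (x : X) {ε : ℝ} (hε : 0 < ε) :
    bowenBall T n x ε = ⋂ j ∈ Finset.range n, T^[j] ⁻¹' Metric.ball (T^[j] x) ε := by
  ext y
  simp only [bowenBall, Set.mem_setOf_eq, bowenDist_lt_iff' T n x y hε, Set.mem_iInter,
    Set.mem_preimage, Metric.mem_ball]
  exact ⟨fun h j hj => by rw [dist_comm]; exact h j hj,
    fun h j hj => by rw [dist_comm]; exact h j hj⟩

/-- if `U` has Lebesgue number at least `ε/4` then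
`N_μ(U^n, 1-δ) ≤ R_μ^δ(T,n,ε/4)` for all `n`. -/
theorem stmt_3 {X : Type*} [MetricSpace X] [CompactSpace X] [MeasurableSpace X] [BorelSpace X]
    (T : X → X) (hT : Continuous T) (μ : Measure X) [IsProbabilityMeasure μ]
    (ε δ : ℝ) (hε : 0 < ε) (hδ : δ ∈ Set.Ioo (0 : ℝ) 1)
    (U : Finset (Set X)) (hU : IsOpenCover U)
    (hLeb : ∀ x : X, ∃ A ∈ U, Metric.ball x (ε / 4) ⊆ A) :
    ∀ n : ℕ, coverNum μ (joinPart T U n) (1 - δ) ≤ katokCovNum T μ n (ε / 4) δ := by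
  intro n
  classical
  have hε4 : 0 < ε / 4 := by linarith
  choose A hAU hAball using hLeb
  have hopen : ∀ z : X, IsOpen (bowenBall T n z (ε / 4)) := by
    intro z
    rw [bowenBall_eq' T n z hε4]
    exact isOpen_biInter_finset fun j _ => Metric.isOpen_ball.preimage (hT.iterate j)
  have hmem : ∀ z : X, z ∈ bowenBall T n z (ε / 4) := fun z => by
    show bowenDist T n z z < ε / 4
    rw [bowenDist_self']; exact hε4
  have hS : {k | ∃ E : Finset X, E.card = k ∧
      1 - ENNReal.ofReal δ < μ (⋃ x ∈ E, bowenBall T n x (ε / 4))}.Nonempty := by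
    obtain ⟨t, ht⟩ := IsCompact.elim_finite_subcover isCompact_univ
      (fun z : X => bowenBall T n z (ε / 4)) (fun z => hopen z)
      (fun z _ => Set.mem_iUnion.mpr ⟨z, hmem z⟩)
    refine ⟨t.card, t, rfl, ?_⟩
    have h1 : (⋃ x ∈ t, bowenBall T n x (ε / 4)) = Set.univ :=
      Set.eq_univ_of_univ_subset ht
    rw [h1, measure_univ]
    exact ENNReal.sub_lt_self ENNReal.one_ne_top one_ne_zero
      (ENNReal.ofReal_pos.mpr hδ.1).ne'
  obtain ⟨E, hEcard, hEmeas⟩ := Nat.sInf_mem hS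
  set g : X → Fin n → Set X := fun z j => A (T^[(j : ℕ)] z) with hg
  set W : Finset (Set X) := E.image (fun z => ⋂ j : Fin n, T^[(j : ℕ)] ⁻¹' g z j) with hW
  have hWsub : W ⊆ joinPart T U n := by
    intro s hs
    rw [hW, Finset.mem_image] at hs
    obtain ⟨z, hz, rfl⟩ := hs
    unfold joinPart
    rw [Finset.mem_image]
    exact ⟨g z, Fintype.mem_piFinset.mpr (fun j => hAU _), rfl⟩
  have hcov : (⋃ x ∈ E, bowenBall T n x (ε / 4)) ⊆ ⋃ A ∈ W, A := by
    intro y hy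
    rw [Set.mem_iUnion₂] at hy
    obtain ⟨z, hz, hyz⟩ := hy
    refine Set.mem_iUnion₂.mpr ⟨_, Finset.mem_image_of_mem _ hz, ?_⟩
    refine Set.mem_iInter.mpr fun j => ?_
    have hj := (bowenDist_lt_iff' T n z y hε4).mp hyz (j : ℕ) (Finset.mem_range.mpr j.isLt)
    exact hAball (T^[(j : ℕ)] z) (Metric.mem_ball.mpr (by rw [dist_comm]; exact hj))
  have hWmeas : ENNReal.ofReal (1 - δ) ≤ μ (⋃ A ∈ W, A) := by
    have he : ENNReal.ofReal (1 - δ) = 1 - ENNReal.ofReal δ := by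
      rw [ENNReal.ofReal_sub _ hδ.1.le, ENNReal.ofReal_one]
    rw [he]
    exact le_trans hEmeas.le (measure_mono hcov)
  calc coverNum μ (joinPart T U n) (1 - δ) ≤ W.card := Nat.sInf_le ⟨W, hWsub, rfl, hWmeas⟩
    _ ≤ E.card := Finset.card_image_le
    _ = katokCovNum T μ n (ε / 4) δ := hEcard
end
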